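/- (Extension through an 8-cycle gadget) Let C = [x y z u₁ u₂ u₃ u₄ u₅] be an 8-cycle with chord xz in a graph G, where z has exactly one neighbor z' outside C ∪ {chord} and y has exactly one neighbor y' outside, each uᵢ has exactly one neighbor outside C, and x has no neighbor outside. Then any proper 3-coloring of G − V(C) extends to a proper 3-coloring of G. -/
import Mathlib

set_option linter.unreachableTactic false
set_option linter.unusedTactic false


lemma fin3_pick : ∀ a b : Fin 3, ∃ t, t ≠ a ∧ t ≠ b := by decide

lemma gadget_colors (py pz q1 q2 q3 q4 q5 : Fin 3) :
    ∃ cx cy cz c1 c2 c3 c4 c5 : Fin 3,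
      cx ≠ cy ∧ cx ≠ cz ∧ cx ≠ c5 ∧ cy ≠ cz ∧ cy ≠ py ∧ cz ≠ c1 ∧ cz ≠ pz ∧
      c1 ≠ c2 ∧ c1 ≠ q1 ∧ c2 ≠ c3 ∧ c2 ≠ q2 ∧ c3 ≠ c4 ∧ c3 ≠ q3 ∧
      c4 ≠ c5 ∧ c4 ≠ q4 ∧ c5 ≠ q5 := by
  by_cases h : pz = py
  · obtain ⟨c5, h5a, h5b⟩ := fin3_pick py q5
    obtain ⟨c4, h4a, h4b⟩ := fin3_pick c5 q4
    obtain ⟨c3, h3a, h3b⟩ := fin3_pick c4 q3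
    obtain ⟨c2, h2a, h2b⟩ := fin3_pick c3 q2
    obtain ⟨c1, h1a, h1b⟩ := fin3_pick c2 q1
    obtain ⟨cz, hza, hzb⟩ := fin3_pick c1 py
    obtain ⟨cy, hya, hyb⟩ := fin3_pick cz py
    refine ⟨py, cy, cz, c1, c2, c3, c4, c5, ?_, ?_, ?_, ?_, ?_, ?_, ?_, ?_, ?_, ?_, ?_,
      ?_, ?_, ?_, ?_, ?_⟩ <;>
      first | assumption | (apply Ne.symm; assumption) | (subst h; assumption)
  · obtain ⟨c1, h1a, h1b⟩ := fin3_pick py q1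
    obtain ⟨c2, h2a, h2b⟩ := fin3_pick c1 q2
    obtain ⟨c3, h3a, h3b⟩ := fin3_pick c2 q3
    obtain ⟨c4, h4a, h4b⟩ := fin3_pick c3 q4
    obtain ⟨c5, h5a, h5b⟩ := fin3_pick c4 q5
    obtain ⟨cx, hxa, hxb⟩ := fin3_pick c5 py
    obtain ⟨cy, hya, hyb⟩ := fin3_pick cx py
    refine ⟨cx, cy, py, c1, c2, c3, c4, c5, ?_, ?_, ?_, ?_, ?_, ?_, ?_, ?_, ?_, ?_, ?_,
      ?_, ?_, ?_, ?_, ?_⟩ <;>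
      first | assumption | (apply Ne.symm; assumption) | (exact fun e => h e.symm)

/-- Extension through an 8-cycle gadget.  Let `[x y z u₁ u₂ u₃ u₄ u₅]` be an 8-cycle with
chord `xz` in a graph `G`, where `z` is a 4-vertex with unique outside neighbor `z'`, `y`
is a 3-vertex with unique outside neighbor `y'`, `x` is a 3-vertex with no outside
neighbor, and each `uᵢ` is a 3-vertex with unique outside neighbor `wᵢ`.  Then any proper
3-coloring of `G` minus the cycle vertices extends to a proper 3-coloring of `G`. -/
theorem eight_cycle_gadget_extends {V : Type*} (G : SimpleGraph V)
    (x y z y' z' u1 u2 u3 u4 u5 w1 w2 w3 w4 w5 : V)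
    (hnodup : ([x, y, z, u1, u2, u3, u4, u5] : List V).Nodup)
    (hx : G.neighborSet x = {y, z, u5})
    (hy : G.neighborSet y = {x, z, y'})
    (hz : G.neighborSet z = {x, y, u1, z'})
    (hu1 : G.neighborSet u1 = {z, u2, w1})
    (hu2 : G.neighborSet u2 = {u1, u3, w2})
    (hu3 : G.neighborSet u3 = {u2, u4, w3})
    (hu4 : G.neighborSet u4 = {u3, u5, w4})
    (hu5 : G.neighborSet u5 = {u4, x, w5})
    (houtside : ∀ t ∈ ({y', z', w1, w2, w3, w4, w5} : Set V),
      t ∉ ({x, y, z, u1, u2, u3, u4, u5} : Set V))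
    (c : V → Fin 3)
    (hc : ∀ a b, G.Adj a b → a ∉ ({x, y, z, u1, u2, u3, u4, u5} : Set V) →
      b ∉ ({x, y, z, u1, u2, u3, u4, u5} : Set V) → c a ≠ c b) :
    ∃ c' : V → Fin 3, (∀ a b, G.Adj a b → c' a ≠ c' b) ∧
      ∀ a, a ∉ ({x, y, z, u1, u2, u3, u4, u5} : Set V) → c' a = c a := by
  classical
  simp only [List.nodup_cons, List.mem_cons, List.not_mem_nil, or_false, not_or,
    List.nodup_nil, and_true] at hnodup
  obtain ⟨⟨nxy, nxz, nx1, nx2, nx3, nx4, nx5⟩, ⟨nyz, ny1, ny2, ny3, ny4, ny5⟩,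
    ⟨nz1, nz2, nz3, nz4, nz5⟩, ⟨n12, n13, n14, n15⟩, ⟨n23, n24, n25⟩, ⟨n34, n35⟩, n45, -⟩ :=
    hnodup
  have hout : ∀ t ∈ ({y', z', w1, w2, w3, w4, w5} : Set V),
      t ≠ x ∧ t ≠ y ∧ t ≠ z ∧ t ≠ u1 ∧ t ≠ u2 ∧ t ≠ u3 ∧ t ≠ u4 ∧ t ≠ u5 := by
    intro t ht
    have := houtside t ht
    simpa [Set.mem_insert_iff, not_or] using this
  obtain ⟨cx, cy, cz, c1, c2, c3, c4, c5, hxy, hxz, hx5, hyz, hyp, hz1, hzp,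
    h12, h1q, h23, h2q, h34, h3q, h45, h4q, h5q⟩ :=
      gadget_colors (c y') (c z') (c w1) (c w2) (c w3) (c w4) (c w5)
  set c' : V → Fin 3 := fun v =>
    if v = x then cx else if v = y then cy else if v = z then cz else
    if v = u1 then c1 else if v = u2 then c2 else if v = u3 then c3 else
    if v = u4 then c4 else if v = u5 then c5 else c v with hc'
  have ex : c' x = cx := by simp [hc']
  have ey : c' y = cy := by simp [hc', (Ne.symm nxy)]
  have ez : c' z = cz := by simp [hc', (Ne.symm nxz), (Ne.symm nyz)]
  have e1 : c' u1 = c1 := by simp [hc', (Ne.symm nx1), (Ne.symm ny1), (Ne.symm nz1)]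
  have e2 : c' u2 = c2 := by simp [hc', (Ne.symm nx2), (Ne.symm ny2), (Ne.symm nz2), (Ne.symm n12)]
  have e3 : c' u3 = c3 := by simp [hc', (Ne.symm nx3), (Ne.symm ny3), (Ne.symm nz3), (Ne.symm n13), (Ne.symm n23)]
  have e4 : c' u4 = c4 := by
    simp [hc', (Ne.symm nx4), (Ne.symm ny4), (Ne.symm nz4), (Ne.symm n14), (Ne.symm n24), (Ne.symm n34)]
  have e5 : c' u5 = c5 := by
    simp [hc', (Ne.symm nx5), (Ne.symm ny5), (Ne.symm nz5), (Ne.symm n15), (Ne.symm n25), (Ne.symm n35), (Ne.symm n45)]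
  have eout : ∀ t, t ≠ x → t ≠ y → t ≠ z → t ≠ u1 → t ≠ u2 → t ≠ u3 → t ≠ u4 → t ≠ u5 →
      c' t = c t := by
    intro t h1 h2 h3 h4 h5 h6 h7 h8
    simp [hc', h1, h2, h3, h4, h5, h6, h7, h8]
  have ey' : c' y' = c y' := by
    obtain ⟨o1, o2, o3, o4, o5, o6, o7, o8⟩ := hout y' (by simp)
    exact eout y' o1 o2 o3 o4 o5 o6 o7 o8
  have ez' : c' z' = c z' := by
    obtain ⟨o1, o2, o3, o4, o5, o6, o7, o8⟩ := hout z' (by simp)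
    exact eout z' o1 o2 o3 o4 o5 o6 o7 o8
  have ew1 : c' w1 = c w1 := by
    obtain ⟨o1, o2, o3, o4, o5, o6, o7, o8⟩ := hout w1 (by simp)
    exact eout w1 o1 o2 o3 o4 o5 o6 o7 o8
  have ew2 : c' w2 = c w2 := by
    obtain ⟨o1, o2, o3, o4, o5, o6, o7, o8⟩ := hout w2 (by simp)
    exact eout w2 o1 o2 o3 o4 o5 o6 o7 o8
  have ew3 : c' w3 = c w3 := by
    obtain ⟨o1, o2, o3, o4, o5, o6, o7, o8⟩ := hout w3 (by simp)
    exact eout w3 o1 o2 o3 o4 o5 o6 o7 o8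
  have ew4 : c' w4 = c w4 := by
    obtain ⟨o1, o2, o3, o4, o5, o6, o7, o8⟩ := hout w4 (by simp)
    exact eout w4 o1 o2 o3 o4 o5 o6 o7 o8
  have ew5 : c' w5 = c w5 := by
    obtain ⟨o1, o2, o3, o4, o5, o6, o7, o8⟩ := hout w5 (by simp)
    exact eout w5 o1 o2 o3 o4 o5 o6 o7 o8
  have ax : ∀ b, G.Adj x b → b = y ∨ b = z ∨ b = u5 := by
    intro b hb
    have : b ∈ G.neighborSet x := hb
    rw [hx] at this; simpa using this
  have ay : ∀ b, G.Adj y b → b = x ∨ b = z ∨ b = y' := by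
    intro b hb
    have : b ∈ G.neighborSet y := hb
    rw [hy] at this; simpa using this
  have az : ∀ b, G.Adj z b → b = x ∨ b = y ∨ b = u1 ∨ b = z' := by
    intro b hb
    have : b ∈ G.neighborSet z := hb
    rw [hz] at this; simpa using this
  have a1 : ∀ b, G.Adj u1 b → b = z ∨ b = u2 ∨ b = w1 := by
    intro b hb
    have : b ∈ G.neighborSet u1 := hb
    rw [hu1] at this; simpa using this
  have a2 : ∀ b, G.Adj u2 b → b = u1 ∨ b = u3 ∨ b = w2 := by
    intro b hb
    have : b ∈ G.neighborSet u2 := hb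
    rw [hu2] at this; simpa using this
  have a3 : ∀ b, G.Adj u3 b → b = u2 ∨ b = u4 ∨ b = w3 := by
    intro b hb
    have : b ∈ G.neighborSet u3 := hb
    rw [hu3] at this; simpa using this
  have a4 : ∀ b, G.Adj u4 b → b = u3 ∨ b = u5 ∨ b = w4 := by
    intro b hb
    have : b ∈ G.neighborSet u4 := hb
    rw [hu4] at this; simpa using this
  have a5 : ∀ b, G.Adj u5 b → b = u4 ∨ b = x ∨ b = w5 := by
    intro b hb
    have : b ∈ G.neighborSet u5 := hb
    rw [hu5] at this; simpa using this
  have key : ∀ a b, G.Adj a b →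
      (a = x ∨ a = y ∨ a = z ∨ a = u1 ∨ a = u2 ∨ a = u3 ∨ a = u4 ∨ a = u5) →
      c' a ≠ c' b := by
    intro a b hab ha
    rcases ha with rfl | rfl | rfl | rfl | rfl | rfl | rfl | rfl
    · rcases ax b hab with rfl | rfl | rfl <;>
        simp only [ex, ey, ez, e5] <;> assumption
    · rcases ay b hab with rfl | rfl | rfl <;>
        simp only [ex, ey, ez, ey'] <;> first | assumption | (apply Ne.symm; assumption)
    · rcases az b hab with rfl | rfl | rfl | rfl <;>
        simp only [ex, ey, ez, e1, ez'] <;> first | assumption | (apply Ne.symm; assumption)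
    · rcases a1 b hab with rfl | rfl | rfl <;>
        simp only [ez, e1, e2, ew1] <;> first | assumption | (apply Ne.symm; assumption)
    · rcases a2 b hab with rfl | rfl | rfl <;>
        simp only [e1, e2, e3, ew2] <;> first | assumption | (apply Ne.symm; assumption)
    · rcases a3 b hab with rfl | rfl | rfl <;>
        simp only [e2, e3, e4, ew3] <;> first | assumption | (apply Ne.symm; assumption)
    · rcases a4 b hab with rfl | rfl | rfl <;>
        simp only [e3, e4, e5, ew4] <;> first | assumption | (apply Ne.symm; assumption)
    · rcases a5 b hab with rfl | rfl | rfl <;>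
        simp only [ex, e4, e5, ew5] <;> first | assumption | (apply Ne.symm; assumption)
  refine ⟨c', ?_, ?_⟩
  · intro a b hab
    by_cases ha : a = x ∨ a = y ∨ a = z ∨ a = u1 ∨ a = u2 ∨ a = u3 ∨ a = u4 ∨ a = u5
    · exact key a b hab ha
    · by_cases hb : b = x ∨ b = y ∨ b = z ∨ b = u1 ∨ b = u2 ∨ b = u3 ∨ b = u4 ∨ b = u5
      · exact (key b a hab.symm hb).symm
      · push_neg at ha hb
        obtain ⟨p1, p2, p3, p4, p5, p6, p7, p8⟩ := ha
        obtain ⟨q1, q2, q3, q4, q5, q6, q7, q8⟩ := hb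
        rw [eout a p1 p2 p3 p4 p5 p6 p7 p8, eout b q1 q2 q3 q4 q5 q6 q7 q8]
        exact hc a b hab (by simp [Set.mem_insert_iff]; tauto)
          (by simp [Set.mem_insert_iff]; tauto)
  · intro a ha
    simp only [Set.mem_insert_iff, Set.mem_singleton_iff, not_or] at ha
    obtain ⟨p1, p2, p3, p4, p5, p6, p7, p8⟩ := ha
    exact eout a p1 p2 p3 p4 p5 p6 p7 p8
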